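/- arXiv:1810.11938 — 3 statements merged into one kernel-verified Lean document; each statement's English description precedes it below -/
import Mathlib

section
/- Define d(k) = 3·a(k) + k for positive integers k. Then for every positive integer k, {d(k)·φ} = 1 − (√5/φ²)·{kφ}. -/
noncomputable def φ : ℝ := (1 + Real.sqrt 5) / 2
noncomputable def a (k : ℕ) : ℤ := ⌊(k : ℝ) * φ⌋
noncomputable def d (k : ℕ) : ℤ := 3 * a k + k

theorem fract_d_phi (k : ℕ) (hk : 0 < k) :
    Int.fract ((d k : ℝ) * φ) = 1 - (Real.sqrt 5 / φ ^ 2) * Int.fract ((k : ℝ) * φ) := by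
  have hs : Real.sqrt 5 ^ 2 = 5 := Real.sq_sqrt (by norm_num)
  have hs2 : (2:ℝ) < Real.sqrt 5 := by nlinarith [Real.sqrt_nonneg 5]
  have hs3 : Real.sqrt 5 < 3 := by nlinarith [Real.sqrt_nonneg 5]
  have hirr5 : Irrational (Real.sqrt 5) := Nat.Prime.irrational_sqrt (by norm_num)
  have hφirr : Irrational φ := by
    unfold φ
    have h1 : Irrational (1 + Real.sqrt 5) := by simpa using hirr5.ratCast_add 1
    simpa using h1.div_natCast (m := 2) (by norm_num)
  have hkφ : Irrational ((k : ℝ) * φ) := by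
    simpa using hφirr.natCast_mul (m := k) hk.ne'
  set f : ℝ := Int.fract ((k : ℝ) * φ) with hf
  have hne : f ≠ 0 := by
    intro h
    have h2 := Int.floor_add_fract ((k : ℝ) * φ)
    rw [← hf, h, add_zero] at h2
    exact hkφ.ne_int _ h2.symm
  have hf0 : 0 < f := lt_of_le_of_ne (Int.fract_nonneg _) (Ne.symm hne)
  have hf1 : f < 1 := Int.fract_lt_one _
  have hka : (k : ℝ) * φ = (a k : ℝ) + f := by
    rw [hf]; unfold a; rw [Int.floor_add_fract]
  have hφsq : φ ^ 2 = φ + 1 := by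
    unfold φ; field_simp; nlinarith [hs]
  have hφa : 3 * φ - 4 > 0 := by unfold φ; nlinarith [hs]
  have hφb : 3 * φ - 4 < 1 := by unfold φ; nlinarith [hs]
  have hkey : (d k : ℝ) * φ = ((4 * a k + 3 * k : ℤ) : ℝ) + (f * (4 - 3 * φ)) := by
    have hd : (d k : ℝ) = 3 * (a k : ℝ) + k := by unfold d; push_cast; ring
    rw [hd]
    have ha : (a k : ℝ) = (k : ℝ) * φ - f := by linarith [hka]
    push_cast
    rw [ha]
    nlinarith [hφsq]
  have hc : Real.sqrt 5 / φ ^ 2 = 3 * φ - 4 := by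
    rw [hφsq]
    unfold φ
    have h35 : (3:ℝ) + Real.sqrt 5 > 0 := by positivity
    field_simp
    nlinarith [hs]
  have hmem : 0 ≤ f * (4 - 3 * φ) + 1 ∧ f * (4 - 3 * φ) + 1 < 1 := by
    constructor
    · nlinarith
    · nlinarith
  rw [hkey, Int.fract_intCast_add]
  have hfr : Int.fract (f * (4 - 3 * φ)) = f * (4 - 3 * φ) + 1 := by
    have e : f * (4 - 3 * φ) = (f * (4 - 3 * φ) + 1) + ((-1 : ℤ) : ℝ) := by
      push_cast; ring
    rw [e, Int.fract_add_intCast, Int.fract_eq_self.mpr hmem]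
    push_cast; ring
  rw [hfr, hc]
  ring
end

section
/- Define c(k) = a(k) + 2k − 1 for positive integers k. Then for every positive integer k: if {kφ} > 1/√5, then {c(k)·φ} = (√5/φ)·{kφ} + (1 − √5)/2, and if {kφ} < 1/√5, then {c(k)·φ} = (√5/φ)·{kφ} + (3 − √5)/2. -/
noncomputable def c (k : ℕ) : ℤ := a k + 2 * k - 1

theorem fract_c_phi (k : ℕ) (hk : 0 < k) :
    (Int.fract ((k : ℝ) * φ) > 1 / Real.sqrt 5 →
      Int.fract ((c k : ℝ) * φ)
        = (Real.sqrt 5 / φ) * Int.fract ((k : ℝ) * φ) + (1 - Real.sqrt 5) / 2) ∧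
    (Int.fract ((k : ℝ) * φ) < 1 / Real.sqrt 5 →
      Int.fract ((c k : ℝ) * φ)
        = (Real.sqrt 5 / φ) * Int.fract ((k : ℝ) * φ) + (3 - Real.sqrt 5) / 2) := by
  have hs5 : Real.sqrt 5 ^ 2 = 5 := Real.sq_sqrt (by norm_num)
  have hs0 : (0:ℝ) < Real.sqrt 5 := Real.sqrt_pos.2 (by norm_num)
  have hs2 : (2:ℝ) < Real.sqrt 5 := by nlinarith
  have hs3 : Real.sqrt 5 < 3 := by nlinarith
  have hφval : φ = (1 + Real.sqrt 5) / 2 := rfl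
  have hφpos : (0:ℝ) < φ := by rw [hφval]; nlinarith
  have h5irr : Irrational (Real.sqrt 5) := (by norm_num : Nat.Prime 5).irrational_sqrt
  have hφirr : Irrational φ := by
    have h1 : Irrational ((1:ℕ) + Real.sqrt 5) := h5irr.natCast_add 1
    have h2 : Irrational (((1:ℕ) + Real.sqrt 5) / (2:ℕ)) := h1.div_natCast (by norm_num)
    have : φ = ((1:ℕ) + Real.sqrt 5) / (2:ℕ) := by rw [hφval]; push_cast; ring
    rwa [this]
  have hkφirr : Irrational ((k:ℝ) * φ) := hφirr.natCast_mul hk.ne'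
  set f := Int.fract ((k:ℝ) * φ) with hfdef
  have hf1 : f < 1 := Int.fract_lt_one _
  have hf0 : 0 < f := by
    rcases lt_or_eq_of_le (Int.fract_nonneg ((k:ℝ) * φ)) with h | h
    · exact h
    · exfalso
      have : (k:ℝ) * φ = (⌊(k:ℝ) * φ⌋ : ℝ) := by
        have h2 := Int.fract_add_floor ((k:ℝ) * φ)
        rw [← h, zero_add] at h2
        exact h2.symm
      exact hkφirr.ne_int _ this
  have hfloor : ((⌊(k:ℝ) * φ⌋ : ℝ)) = (k:ℝ) * φ - f := by
    rw [hfdef, Int.self_sub_fract]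
  have h3φ : Real.sqrt 5 / φ = 3 - φ := by
    rw [hφval]
    rw [div_eq_iff (by nlinarith : ((1:ℝ) + Real.sqrt 5) / 2 ≠ 0)]
    nlinarith
  have key : (c k : ℝ) * φ =
      ((k + 3 * ⌊(k:ℝ) * φ⌋ : ℤ) : ℝ) + ((Real.sqrt 5 / φ) * f - φ) := by
    have hc : (c k : ℝ) = (⌊(k:ℝ) * φ⌋ : ℝ) + 2 * k - 1 := by
      simp only [c, a]; push_cast; ring
    rw [hc, h3φ]
    push_cast
    rw [hfloor]
    have hφ2 : φ ^ 2 = φ + 1 := by rw [hφval]; nlinarith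
    nlinarith [hφ2]
  have hfr : Int.fract ((c k : ℝ) * φ) = Int.fract ((Real.sqrt 5 / φ) * f - φ) := by
    rw [key, Int.fract_intCast_add]
  rw [h3φ] at hfr ⊢
  constructor
  · intro h
    have hf' : 1 < f * Real.sqrt 5 := by
      rw [gt_iff_lt, div_lt_iff₀ hs0] at h; linarith
    have hfl : ⌊(3 - φ) * f - φ⌋ = -1 := by
      rw [Int.floor_eq_iff]
      constructor
      · push_cast
        rw [hφval]
        nlinarith
      · push_cast
        rw [hφval]
        nlinarith
    rw [hfr, Int.fract, hfl, hφval]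
    push_cast
    ring
  · intro h
    have hf' : f * Real.sqrt 5 < 1 := by
      exact (lt_div_iff₀ hs0).1 h
    have hfl : ⌊(3 - φ) * f - φ⌋ = -2 := by
      rw [Int.floor_eq_iff]
      constructor
      · push_cast
        rw [hφval]
        nlinarith
      · push_cast
        rw [hφval]
        nlinarith
    rw [hfr, Int.fract, hfl, hφval]
    push_cast
    ring
end

section
/- Define c(k) = a(k) + 2k − 1 and d(k) = 3·a(k) + k for positive integers k, and let B = {⌊mφ²⌋ : m a positive integer}. Then for every positive integer k, it is not the case that both c(k) ∈ B and d(k) ∈ B; equivalently, for every k at least one of c(k), d(k) belongs to the complementary Beatty sequence A = {⌊mφ⌋ : m a positive integer}. -/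
/-- The Beatty sequence `A = {⌊mφ⌋ : m ≥ 1}`. -/
noncomputable def Aset : Set ℤ := {x | ∃ m : ℕ, 0 < m ∧ x = ⌊(m : ℝ) * φ⌋}

/-- The Beatty sequence `B = {⌊mφ²⌋ : m ≥ 1}`. -/
noncomputable def Bset : Set ℤ := {x | ∃ m : ℕ, 0 < m ∧ x = ⌊(m : ℝ) * φ ^ 2⌋}

lemma sqrt5_irr : Irrational (Real.sqrt 5) := by
  have h : Nat.Prime 5 := by norm_num
  have := h.irrational_sqrt
  simpa using this

lemma sqrt5_sq : Real.sqrt 5 ^ 2 = 5 := Real.sq_sqrt (by norm_num)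

lemma sqrt5_pos : (0:ℝ) < Real.sqrt 5 := Real.sqrt_pos.mpr (by norm_num)

lemma sqrt5_lt3 : Real.sqrt 5 < 3 := by
  nlinarith [sqrt5_sq, sqrt5_pos]

lemma sqrt5_gt2 : (2:ℝ) < Real.sqrt 5 := by
  nlinarith [sqrt5_sq, sqrt5_pos]

/-- key irrationality fact -/
lemma key (p q : ℤ) (hq : q ≠ 0) : (q:ℝ) * Real.sqrt 5 ≠ (p:ℤ) := by
  intro h
  apply sqrt5_irr
  refine ⟨(p : ℚ) / (q : ℚ), ?_⟩
  have hq' : (q:ℝ) ≠ 0 := Int.cast_ne_zero.mpr hq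
  push_cast
  field_simp
  linarith [h]

lemma mul_phi_ne_int (m : ℕ) (hm : 0 < m) (z : ℤ) : (m:ℝ) * φ ≠ z := by
  intro h
  apply key (2*z - m) m (by positivity)
  have : (m:ℝ) * ((1 + Real.sqrt 5)/2) = z := h
  push_cast
  nlinarith [this]

lemma phi_sq : φ ^ 2 = φ + 1 := by
  unfold φ; nlinarith [sqrt5_sq]

lemma phi_gt_one : (1:ℝ) < φ := by
  unfold φ; nlinarith [sqrt5_gt2]

lemma phi_lt_two : φ < 2 := by
  unfold φ; nlinarith [sqrt5_lt3]

lemma mul_phisq_ne_int (m : ℕ) (hm : 0 < m) (z : ℤ) : (m:ℝ) * φ ^ 2 ≠ z := by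
  rw [phi_sq]
  intro h
  apply mul_phi_ne_int m hm (z - m)
  push_cast
  linarith [h]

/-- Beatty disjointness -/
lemma A_disj_B {x : ℤ} (hA : x ∈ Aset) : x ∉ Bset := by
  obtain ⟨m, hm, hxm⟩ := hA
  rintro ⟨n, hn, hxn⟩
  have h1 : (x:ℝ) ≤ m * φ := hxm ▸ Int.floor_le _
  have h1' : (x:ℝ) < m * φ := h1.lt_of_ne (fun h => mul_phi_ne_int m hm x h.symm)
  have h2 : (m:ℝ) * φ < x + 1 := by
    have := Int.lt_floor_add_one ((m:ℝ) * φ)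
    rw [← hxm] at this; exact_mod_cast this
  have h3 : (x:ℝ) ≤ n * φ ^ 2 := hxn ▸ Int.floor_le _
  have h3' : (x:ℝ) < n * φ ^ 2 := h3.lt_of_ne (fun h => mul_phisq_ne_int n hn x h.symm)
  have h4 : (n:ℝ) * φ ^ 2 < x + 1 := by
    have := Int.lt_floor_add_one ((n:ℝ) * φ ^ 2)
    rw [← hxn] at this; exact_mod_cast this
  have hp1 : (1:ℝ) < φ := phi_gt_one
  have hp2 : φ < 2 := phi_lt_two
  have hps : φ ^ 2 = φ + 1 := phi_sq
  have hm1 : (x:ℝ) * (φ - 1) < m := by nlinarith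
  have hn1 : (x:ℝ) * (2 - φ) < n := by nlinarith
  have hm2 : (m:ℝ) < ((x:ℝ) + 1) * (φ - 1) := by nlinarith
  have hn2 : (n:ℝ) < ((x:ℝ) + 1) * (2 - φ) := by nlinarith
  have hlt : (x:ℝ) < (m:ℝ) + (n:ℝ) := by nlinarith
  have hgt : (m:ℝ) + (n:ℝ) < (x:ℝ) + 1 := by nlinarith
  have hlt' : x < (m:ℤ) + n := by exact_mod_cast hlt
  have hgt' : (m:ℤ) + n < x + 1 := by exact_mod_cast hgt
  omega

lemma mem_A (x M : ℤ) (hM : 0 < M) (h1 : (x:ℝ) ≤ M * φ) (h2 : (M:ℝ) * φ < x + 1) :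
    x ∈ Aset := by
  refine ⟨M.toNat, by omega, ?_⟩
  have hMZ : (M.toNat : ℤ) = M := Int.toNat_of_nonneg hM.le
  have hMR : ((M.toNat : ℕ) : ℝ) = (M : ℝ) := by exact_mod_cast congrArg Int.cast hMZ
  rw [hMR]
  symm
  rw [Int.floor_eq_iff]
  exact ⟨h1, by push_cast; linarith⟩

theorem not_both_c_d_in_B (k : ℕ) (hk : 0 < k) :
    ¬(c k ∈ Bset ∧ d k ∈ Bset) ∧ (c k ∈ Aset ∨ d k ∈ Aset) := by
  set s : ℝ := Real.sqrt 5 with hs_def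
  have hs : s ^ 2 = 5 := sqrt5_sq
  have hs2 : (2:ℝ) < s := sqrt5_gt2
  have hs3 : s < 3 := sqrt5_lt3
  have hspos : (0:ℝ) < s := sqrt5_pos
  have hφ : φ = (1 + s) / 2 := by rw [hs_def]; rfl
  set A0 : ℤ := a k with hA0_def
  set θ : ℝ := (k:ℝ) * φ - A0 with hθ_def
  have hA0 : (A0:ℝ) = (k:ℝ) * φ - θ := by rw [hθ_def]; ring
  have hA0s : (A0:ℝ) = (k:ℝ) * ((1 + s) / 2) - θ := by rw [← hφ]; exact hA0
  have hfloor : (A0:ℝ) = ((⌊(k:ℝ) * φ⌋ : ℤ) : ℝ) := rfl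
  have hθpos : 0 < θ := by
    have h1 : (A0:ℝ) ≤ (k:ℝ) * φ := Int.floor_le _
    have h2 : (A0:ℝ) ≠ (k:ℝ) * φ := fun h => mul_phi_ne_int k hk A0 h.symm
    have := lt_of_le_of_ne h1 h2
    rw [hθ_def]; linarith
  have hθlt : θ < 1 := by
    have := Int.lt_floor_add_one ((k:ℝ) * φ)
    rw [hθ_def]; linarith [hfloor]
  have hak : (k:ℤ) ≤ A0 := by
    rw [hA0_def]
    apply Int.le_floor.mpr
    have hk' : (1:ℝ) ≤ (k:ℝ) := by exact_mod_cast hk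
    push_cast
    nlinarith [phi_gt_one]
  have hk1 : (1:ℤ) ≤ (k:ℤ) := by exact_mod_cast hk
  have hdval : ((d k : ℤ):ℝ) = 3*(A0:ℝ) + (k:ℝ) := by
    simp only [d, ← hA0_def]; push_cast; ring
  have hcval : ((c k : ℤ):ℝ) = (A0:ℝ) + 2*(k:ℝ) - 1 := by
    simp only [c, ← hA0_def]; push_cast; ring
  have hane : θ * s ≠ φ := by
    intro h
    have heq : ((k:ℝ) * ((1 + s) / 2) - A0) * s = (1 + s) / 2 := by
      rw [hθ_def, hφ] at h; rw [← hφ] at h ⊢; exact h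
    have hkey : s * ((k:ℝ) - 2*A0 - 1) = 1 - 5*(k:ℝ) := by
      linear_combination 2*heq - (k:ℝ)*hs
    by_cases h0 : (k:ℤ) - 2*A0 - 1 = 0
    · have h0' : ((k:ℝ)) - 2*(A0:ℝ) - 1 = 0 := by exact_mod_cast h0
      rw [h0', mul_zero] at hkey
      have h5 : (5:ℝ)*(k:ℝ) = 1 := by linarith
      have h5' : (5*(k:ℤ) : ℤ) = 1 := by exact_mod_cast h5
      omega
    · exact key (1 - 5*k) ((k:ℤ) - 2*A0 - 1) h0 (by push_cast; linear_combination hkey)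
  clear_value s A0 θ
  clear hθ_def hA0_def hA0 hfloor hs_def
  rcases lt_or_gt_of_ne hane with hcase | hcase
  · -- θ s < φ : d k ∈ Aset with M = A0 + 2k
    have hcase' : θ * s < (1 + s) / 2 := by rw [← hφ]; exact hcase
    have hMval : ((A0:ℝ) + 2*(k:ℝ)) * φ = (3*(A0:ℝ) + (k:ℝ)) + θ * (5 - s) / 2 := by
      rw [hφ, hA0s]
      linear_combination ((k:ℝ)/4) * hs
    have hub : θ * (5 - s) < 2 := by
      have h1 : θ * s * (5 - s) < ((1 + s) / 2) * (5 - s) :=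
        mul_lt_mul_of_pos_right hcase' (by linarith)
      have h2 : ((1 + s) / 2) * (5 - s) = 2 * s := by linear_combination -(1/2) * hs
      have h4 : s * (θ * (5 - s)) < s * 2 := by nlinarith [h1, h2]
      exact lt_of_mul_lt_mul_left h4 hspos.le
    have hlb : 0 < θ * (5 - s) := mul_pos hθpos (by linarith)
    have hdA : d k ∈ Aset := by
      apply mem_A (d k) (A0 + 2 * k) (by omega)
      · push_cast
        rw [hdval]
        linarith [hMval]
      · push_cast
        rw [hdval]
        linarith [hMval]
    exact ⟨fun h => A_disj_B hdA h.2, Or.inr hdA⟩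
  · -- θ s > φ : c k ∈ Aset with M = 2A0 - k + 1
    have hcase' : (1 + s) / 2 < θ * s := by rw [← hφ]; exact hcase
    have hMval : (2*(A0:ℝ) - (k:ℝ) + 1) * φ
        = ((A0:ℝ) + 2*(k:ℝ) - 1) + (1 + (1 + s)/2 - θ * s) := by
      rw [hφ, hA0s]
      linear_combination ((k:ℝ)/2) * hs
    have hts : θ * s < s := by
      have := mul_lt_mul_of_pos_right hθlt hspos
      linarith [this]
    have hcA : c k ∈ Aset := by
      apply mem_A (c k) (2 * A0 - k + 1) (by omega)
      · push_cast
        rw [hcval]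
        linarith [hMval, hts, hs3]
      · push_cast
        rw [hcval]
        linarith [hMval, hcase']
    exact ⟨fun h => A_disj_B hcA h.1, Or.inl hcA⟩
end
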